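/- For W(x) = 1/(1+|x|/2) on ℝ³, define L₊ f := −Δf − 3|x|⁻¹ W² f and ΛW = (1/2)W + x·∇W. Then L₊(ΛW) = 0 pointwise for x ≠ 0. -/

import Mathlib

open scoped RealInnerProductSpace

noncomputable section

abbrev E3 := EuclideanSpace ℝ (Fin 3)

def W (x : E3) : ℝ := (1 + ‖x‖ / 2)⁻¹

def lap (f : E3 → ℝ) (x : E3) : ℝ :=
  ∑ i : Fin 3,
    fderiv ℝ (fun y => fderiv ℝ f y (EuclideanSpace.single i 1)) x (EuclideanSpace.single i 1)

/-- The linearized operator `L₊ f = -Δf - 3|x|⁻¹ W² f`. -/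
def Lplus (f : E3 → ℝ) (x : E3) : ℝ := -lap f x - 3 * ‖x‖⁻¹ * (W x) ^ 2 * f x

def Lam (f : E3 → ℝ) (x : E3) : ℝ := (1 / 2) * f x + ⟪x, gradient f x⟫

/- ### Auxiliary 1D radial profiles -/

def q (r : ℝ) : ℝ := (1 + r / 2)⁻¹

def u (r : ℝ) : ℝ := (1 / 2) * q r - (r / 2) * q r ^ 2

def u1 (r : ℝ) : ℝ := -(3 / 4) * q r ^ 2 + (r / 2) * q r ^ 3

def u2 (r : ℝ) : ℝ := (5 / 4) * q r ^ 3 - (3 * r / 4) * q r ^ 4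

def h (r : ℝ) : ℝ := u1 r * r⁻¹

def h1 (r : ℝ) : ℝ := u2 r * r⁻¹ + u1 r * (-(r ^ 2)⁻¹)

lemma s_ne (r : ℝ) (hr : 0 ≤ r) : (1 : ℝ) + r / 2 ≠ 0 := by positivity

lemma hasDerivAt_q (r : ℝ) (hs : (1 : ℝ) + r / 2 ≠ 0) :
    HasDerivAt q (-(1 / 2) * q r ^ 2) r := by
  have hbase : HasDerivAt (fun t : ℝ => 1 + t / 2) (1 / 2) r :=
    ((hasDerivAt_id r).div_const 2).const_add 1
  have := hbase.inv hs
  refine this.congr_deriv ?_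
  unfold q
  field_simp

lemma hasDerivAt_u (r : ℝ) (hs : (1 : ℝ) + r / 2 ≠ 0) : HasDerivAt u (u1 r) r := by
  have hq := hasDerivAt_q r hs
  have h1 : HasDerivAt (fun t => (1 / 2 : ℝ) * q t) ((1 / 2) * (-(1 / 2) * q r ^ 2)) r :=
    hq.const_mul _
  have h2 : HasDerivAt (fun t => (t / 2) * q t ^ 2)
      ((1 / 2) * q r ^ 2 + (r / 2) * (2 * q r ^ 1 * (-(1 / 2) * q r ^ 2))) r :=
    ((hasDerivAt_id r).div_const 2).mul (hq.pow 2)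
  have := h1.sub h2
  refine this.congr_deriv ?_
  unfold u1; ring

lemma hasDerivAt_u1 (r : ℝ) (hs : (1 : ℝ) + r / 2 ≠ 0) : HasDerivAt u1 (u2 r) r := by
  have hq := hasDerivAt_q r hs
  have h1 : HasDerivAt (fun t => (-(3 / 4) : ℝ) * q t ^ 2)
      ((-(3 / 4)) * (2 * q r ^ 1 * (-(1 / 2) * q r ^ 2))) r := (hq.pow 2).const_mul _
  have h2 : HasDerivAt (fun t => (t / 2) * q t ^ 3)
      ((1 / 2) * q r ^ 3 + (r / 2) * (3 * q r ^ 2 * (-(1 / 2) * q r ^ 2))) r :=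
    ((hasDerivAt_id r).div_const 2).mul (hq.pow 3)
  have := h1.add h2
  refine this.congr_deriv ?_
  unfold u2; ring

lemma hasDerivAt_h (r : ℝ) (hr : r ≠ 0) (hs : (1 : ℝ) + r / 2 ≠ 0) :
    HasDerivAt h (h1 r) r :=
  (hasDerivAt_u1 r hs).mul (hasDerivAt_inv hr)

/- ### Derivative of the norm and of radial functions -/

lemma hasFDerivAt_norm' (x : E3) (hx : x ≠ 0) :
    HasFDerivAt (fun y : E3 => ‖y‖) (‖x‖⁻¹ • (innerSL ℝ x : E3 →L[ℝ] ℝ)) x := by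
  have hnx : ‖x‖ ≠ 0 := norm_ne_zero_iff.mpr hx
  have hsq : HasFDerivAt (fun y : E3 => ‖y‖ ^ 2) (2 • (innerSL ℝ x)) x :=
    (hasStrictFDerivAt_norm_sq x).hasFDerivAt
  have hpos : (‖x‖ : ℝ) ^ 2 ≠ 0 := pow_ne_zero _ hnx
  have hsqrt : HasDerivAt Real.sqrt (1 / (2 * Real.sqrt (‖x‖ ^ 2))) (‖x‖ ^ 2) :=
    Real.hasDerivAt_sqrt hpos
  have h3 := hsqrt.comp_hasFDerivAt x hsq
  have h3' : HasFDerivAt (fun y : E3 => Real.sqrt (‖y‖ ^ 2))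
      ((1 / (2 * Real.sqrt (‖x‖ ^ 2))) • 2 • (innerSL ℝ x : E3 →L[ℝ] ℝ)) x := h3
  have heq : (fun y : E3 => Real.sqrt (‖y‖ ^ 2)) = fun y : E3 => ‖y‖ :=
    funext fun y => Real.sqrt_sq (norm_nonneg y)
  rw [heq] at h3'
  refine h3'.congr_fderiv ?_
  rw [Real.sqrt_sq (norm_nonneg x)]
  ext v
  rw [two_smul]
  simp only [ContinuousLinearMap.smul_apply, ContinuousLinearMap.add_apply, smul_eq_mul]
  field_simp
  ring

lemma radial_hasFDerivAt {φ : ℝ → ℝ} {d : ℝ} {x : E3} (hx : x ≠ 0)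
    (hφ : HasDerivAt φ d ‖x‖) :
    HasFDerivAt (fun y : E3 => φ ‖y‖) ((d * ‖x‖⁻¹) • (innerSL ℝ x : E3 →L[ℝ] ℝ)) x := by
  have := hφ.comp_hasFDerivAt x (hasFDerivAt_norm' x hx)
  rwa [smul_smul] at this

/- ### W and Lam W as radial functions -/

lemma W_radial : W = fun y : E3 => q ‖y‖ := rfl

lemma s_pos (y : E3) : (0 : ℝ) < 1 + ‖y‖ / 2 := by positivity

lemma gradW (y : E3) (hy : y ≠ 0) :
    gradient W y = ((-(1 / 2) * q ‖y‖ ^ 2) * ‖y‖⁻¹) • y := by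
  have hf : HasFDerivAt W ((-(1 / 2) * q ‖y‖ ^ 2 * ‖y‖⁻¹) • (innerSL ℝ y : E3 →L[ℝ] ℝ)) y := by
    rw [W_radial]
    exact radial_hasFDerivAt hy (hasDerivAt_q ‖y‖ (s_pos y).ne')
  have hg := hf.hasGradientAt
  have hsymm : ((InnerProductSpace.toDual ℝ E3).symm
      ((-(1 / 2) * q ‖y‖ ^ 2 * ‖y‖⁻¹) • (innerSL ℝ y : E3 →L[ℝ] ℝ)))
      = ((-(1 / 2) * q ‖y‖ ^ 2) * ‖y‖⁻¹) • y := by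
    have htd : (InnerProductSpace.toDual ℝ E3) (((-(1 / 2) * q ‖y‖ ^ 2) * ‖y‖⁻¹) • y)
        = (-(1 / 2) * q ‖y‖ ^ 2 * ‖y‖⁻¹) • (innerSL ℝ y : E3 →L[ℝ] ℝ) := by
      ext v
      simp [InnerProductSpace.toDual_apply_apply, real_inner_smul_left]
    rw [← htd, LinearIsometryEquiv.symm_apply_apply]
  rw [← hsymm]
  exact hg.gradient

lemma LamW_eq (y : E3) (hy : y ≠ 0) : Lam W y = u ‖y‖ := by
  have hny : ‖y‖ ≠ 0 := norm_ne_zero_iff.mpr hy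
  rw [Lam, gradW y hy, real_inner_smul_right, real_inner_self_eq_norm_sq]
  show 1 / 2 * W y + _ = _
  rw [W]
  unfold u q
  field_simp
  ring

lemma hasFDerivAt_LamW (y : E3) (hy : y ≠ 0) :
    HasFDerivAt (Lam W) ((u1 ‖y‖ * ‖y‖⁻¹) • (innerSL ℝ y : E3 →L[ℝ] ℝ)) y := by
  have h0 := radial_hasFDerivAt hy (hasDerivAt_u ‖y‖ (s_pos y).ne')
  apply h0.congr_of_eventuallyEq
  filter_upwards [IsOpen.mem_nhds isOpen_compl_singleton hy] with z hz
  exact LamW_eq z hz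

lemma fderiv_LamW_apply (y : E3) (hy : y ≠ 0) (i : Fin 3) :
    fderiv ℝ (Lam W) y (EuclideanSpace.single i 1) = h ‖y‖ * y i := by
  rw [(hasFDerivAt_LamW y hy).fderiv]
  simp only [ContinuousLinearMap.smul_apply, innerSL_apply_apply, smul_eq_mul]
  rw [EuclideanSpace.inner_single_right]
  unfold h
  simp
  try ring

theorem stmt_6 : ∀ x : E3, x ≠ 0 → Lplus (Lam W) x = 0 := by
  intro x hx
  have hr : (0 : ℝ) < ‖x‖ := norm_pos_iff.mpr hx
  have hnr : ‖x‖ ≠ 0 := hr.ne'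
  have hs : (1 : ℝ) + ‖x‖ / 2 ≠ 0 := (s_pos x).ne'
  -- second derivatives
  have key : ∀ i : Fin 3,
      fderiv ℝ (fun y => fderiv ℝ (Lam W) y (EuclideanSpace.single i 1)) x
        (EuclideanSpace.single i 1)
      = h ‖x‖ + x i * ((h1 ‖x‖ * ‖x‖⁻¹) * x i) := by
    intro i
    have hevent : (fun y => fderiv ℝ (Lam W) y (EuclideanSpace.single i 1))
        =ᶠ[nhds x] fun y : E3 => h ‖y‖ * y i := by
      filter_upwards [IsOpen.mem_nhds isOpen_compl_singleton hx] with z hz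
      exact fderiv_LamW_apply z hz i
    have hA : HasFDerivAt (fun y : E3 => h ‖y‖)
        ((h1 ‖x‖ * ‖x‖⁻¹) • (innerSL ℝ x : E3 →L[ℝ] ℝ)) x :=
      radial_hasFDerivAt hx (hasDerivAt_h ‖x‖ hnr hs)
    have hB : HasFDerivAt (fun y : E3 => y i)
        (EuclideanSpace.proj (𝕜 := ℝ) i : E3 →L[ℝ] ℝ) x :=
      (EuclideanSpace.proj (𝕜 := ℝ) i).hasFDerivAt
    have hprod : HasFDerivAt (fun y : E3 => h ‖y‖ * y i) _ x := hA.mul hB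
    rw [hevent.fderiv_eq, hprod.fderiv]
    simp only [ContinuousLinearMap.add_apply, ContinuousLinearMap.smul_apply,
      innerSL_apply_apply, smul_eq_mul]
    rw [EuclideanSpace.inner_single_right]
    simp [EuclideanSpace.single_apply]
  have hsum : ∑ i : Fin 3, (x i) * (x i) = ‖x‖ ^ 2 := by
    rw [← real_inner_self_eq_norm_sq]
    simp only [PiLp.inner_apply, RCLike.inner_apply, conj_trivial]
  have hlap : lap (Lam W) x = 3 * h ‖x‖ + (h1 ‖x‖ * ‖x‖⁻¹) * ‖x‖ ^ 2 := by
    rw [lap]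
    rw [Fin.sum_univ_three, key 0, key 1, key 2]
    have := hsum
    rw [Fin.sum_univ_three] at this
    linear_combination (h1 ‖x‖ * ‖x‖⁻¹) * this
  rw [Lplus, hlap, LamW_eq x hx]
  show -(3 * h ‖x‖ + h1 ‖x‖ * ‖x‖⁻¹ * ‖x‖ ^ 2) - 3 * ‖x‖⁻¹ * (1 + ‖x‖ / 2)⁻¹ ^ 2 * u ‖x‖ = 0
  unfold h h1 u2 u1 u q
  field_simp
  ring
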